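/- Let H_n(t) = ∫₀ᵗ dt₁ ⋯ ∫_{t_{n−1}}ᵗ dt_n ∏_{k=1}^{n+1} cos(c(t_k−t_{k−1})) with t₀=0, t_{n+1}=t, H₀(t)=cos(ct), and let E(t) = e^{−λt} ∑_{n=0}^∞ λⁿ H_n(t). Then E satisfies E'' = −λE' − c²E with E(0)=1, E'(0)=0, and hence E(t) = e^{−λt/2}[cosh((t/2)√(λ²−4c²)) + (λ/√(λ²−4c²)) sinh((t/2)√(λ²−4c²))] if 0<2c<λ; E(t) = e^{−λt/2}(1 + λt/2) if λ = 2c > 0; and E(t) = e^{−λt/2}[cos((t/2)√(4c²−λ²)) + (λ/√(4c²−λ²)) sin((t/2)√(4c²−λ²))] if 2c > λ > 0. -/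

import Mathlib

open Real MeasureTheory

open intervalIntegral Filter

/-- Iterated simplex integral with `s₀ = a`, `s_{n+1} = t`. -/
noncomputable def iterInt (f : ℝ → ℝ) : ℕ → ℝ → ℝ → ℝ
  | 0, a, t => f (t - a)
  | n+1, a, t => ∫ s in a..t, f (s - a) * iterInt f n s t

/-- `H_n(t)`: simplex integral of products of cosines of increments,
`H_0(t) = cos(ct)`; it arises from the random motion on the unit sphere. -/
noncomputable def H (c : ℝ) (n : ℕ) (t : ℝ) : ℝ :=
  iterInt (fun u => Real.cos (c * u)) n 0 t

noncomputable def KK (c : ℝ) (u : ℝ → ℝ) (t : ℝ) : ℝ :=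
  ∫ s in (0:ℝ)..t, Real.cos (c*(t-s)) * u s

lemma primitive_hasDerivAt {f : ℝ → ℝ} (hf : Continuous f) (t : ℝ) :
    HasDerivAt (fun x => ∫ s in (0:ℝ)..x, f s) (f t) t :=
  integral_hasDerivAt_right (hf.intervalIntegrable _ _)
    (hf.stronglyMeasurableAtFilter _ _) hf.continuousAt

lemma KK_eq {c : ℝ} {u : ℝ → ℝ} (hu : Continuous u) (t : ℝ) :
    KK c u t = Real.cos (c*t) * (∫ s in (0:ℝ)..t, Real.cos (c*s) * u s)
      + Real.sin (c*t) * (∫ s in (0:ℝ)..t, Real.sin (c*s) * u s) := by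
  have h1 : ∀ s : ℝ, Real.cos (c*(t-s)) * u s
      = Real.cos (c*t) * (Real.cos (c*s) * u s) + Real.sin (c*t) * (Real.sin (c*s) * u s) := by
    intro s
    have : c*(t-s) = c*t - c*s := by ring
    rw [this, Real.cos_sub]; ring
  rw [KK]
  simp_rw [h1]
  have i1 : Continuous fun s => Real.cos (c*t) * (Real.cos (c*s) * u s) := by fun_prop
  have i2 : Continuous fun s => Real.sin (c*t) * (Real.sin (c*s) * u s) := by fun_prop
  rw [integral_add (i1.intervalIntegrable _ _) (i2.intervalIntegrable _ _),
    intervalIntegral.integral_const_mul, intervalIntegral.integral_const_mul]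

lemma KK_hasDerivAt {c : ℝ} {u : ℝ → ℝ} (hu : Continuous u) (t : ℝ) :
    HasDerivAt (KK c u)
      (-c * Real.sin (c*t) * (∫ s in (0:ℝ)..t, Real.cos (c*s) * u s)
        + c * Real.cos (c*t) * (∫ s in (0:ℝ)..t, Real.sin (c*s) * u s) + u t) t := by
  have hcu : Continuous fun s => Real.cos (c*s) * u s := by fun_prop
  have hsu : Continuous fun s => Real.sin (c*s) * u s := by fun_prop
  have hA := primitive_hasDerivAt hcu t
  have hB := primitive_hasDerivAt hsu t
  have hcos : HasDerivAt (fun x => Real.cos (c*x)) (-c * Real.sin (c*t)) t := by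
    simpa [mul_comm, Function.comp_def] using ((Real.hasDerivAt_cos (c*t)).comp t ((hasDerivAt_id t).const_mul c))
  have hsin : HasDerivAt (fun x => Real.sin (c*x)) (c * Real.cos (c*t)) t := by
    simpa [mul_comm, Function.comp_def] using ((Real.hasDerivAt_sin (c*t)).comp t ((hasDerivAt_id t).const_mul c))
  have h := (hcos.fun_mul hA).fun_add (hsin.fun_mul hB)
  have heq : (fun t => Real.cos (c*t) * (∫ s in (0:ℝ)..t, Real.cos (c*s) * u s)
      + Real.sin (c*t) * (∫ s in (0:ℝ)..t, Real.sin (c*s) * u s)) = KK c u :=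
    funext fun t => (KK_eq hu t).symm
  rw [heq] at h
  convert! h using 1
  have : Real.cos (c*t) * Real.cos (c*t) + Real.sin (c*t) * Real.sin (c*t) = 1 := by
    rw [← Real.cos_sub]; simp
  linear_combination (-(u t)) * this

lemma KK_continuous {c : ℝ} {u : ℝ → ℝ} (hu : Continuous u) : Continuous (KK c u) := by
  have : Differentiable ℝ (KK c u) := fun t => (KK_hasDerivAt hu t).differentiableAt
  exact this.continuous

lemma iterInt_shift (f : ℝ → ℝ) : ∀ (n : ℕ) (a t : ℝ),
    iterInt f n a t = iterInt f n 0 (t - a) := by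
  intro n
  induction n with
  | zero => intro a t; simp [iterInt]
  | succ n ih =>
    intro a t
    show (∫ s in a..t, f (s - a) * iterInt f n s t)
      = ∫ s in (0:ℝ)..(t-a), f (s - 0) * iterInt f n s (t - a)
    have h1 : ∀ s : ℝ, f (s - a) * iterInt f n s t
        = (fun u => f u * iterInt f n 0 ((t - a) - u)) (s - a) := by
      intro s
      simp only []
      rw [ih s t]
      congr 2
      ring
    simp_rw [h1]
    rw [intervalIntegral.integral_comp_sub_right (fun u => f u * iterInt f n 0 ((t - a) - u)) a]
    simp only [sub_self]
    congr 1
    ext s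
    rw [ih s (t-a)]
    simp

lemma H_succ (c : ℝ) (n : ℕ) (t : ℝ) : H c (n+1) t = KK c (H c n) t := by
  show (∫ s in (0:ℝ)..t, Real.cos (c * (s - 0)) * iterInt (fun u => Real.cos (c*u)) n s t) = _
  have h1 : ∀ s : ℝ, Real.cos (c * (s - 0)) * iterInt (fun u => Real.cos (c*u)) n s t
      = (fun x => Real.cos (c*(t-x)) * H c n x) (t - s) := by
    intro s
    rw [iterInt_shift]
    simp only [H]
    rw [sub_zero]
    congr 2
    ring
  simp_rw [h1]
  rw [intervalIntegral.integral_comp_sub_left (fun x => Real.cos (c*(t-x)) * H c n x) t]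
  simp [KK]

noncomputable def Kn (c : ℝ) : ℕ → (ℝ → ℝ) → (ℝ → ℝ)
  | 0, u => u
  | n+1, u => KK c (Kn c n u)

lemma Kn_continuous {c : ℝ} {u : ℝ → ℝ} (hu : Continuous u) (n : ℕ) :
    Continuous (Kn c n u) := by
  induction n with
  | zero => exact hu
  | succ n ih => exact KK_continuous ih

lemma KK_add {c : ℝ} {u v : ℝ → ℝ} (hu : Continuous u) (hv : Continuous v) (a t : ℝ) :
    KK c (fun s => u s + a * v s) t = KK c u t + a * KK c v t := by
  unfold KK
  have h1 : ∀ s : ℝ, Real.cos (c*(t-s)) * (u s + a * v s)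
      = Real.cos (c*(t-s)) * u s + a * (Real.cos (c*(t-s)) * v s) := fun s => by ring
  simp_rw [h1]
  have i1 : Continuous fun s => Real.cos (c*(t-s)) * u s := by fun_prop
  have i2 : Continuous fun s => a * (Real.cos (c*(t-s)) * v s) := by fun_prop
  rw [integral_add (i1.intervalIntegrable _ _) (i2.intervalIntegrable _ _), intervalIntegral.integral_const_mul]

lemma KK_bound {c : ℝ} {u : ℝ → ℝ} (hu : Continuous u) {M t : ℝ} {n : ℕ}
    (hb : ∀ s ∈ Set.uIcc (0:ℝ) t, |u s| ≤ M * |s|^n / n.factorial) :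
    ∀ s ∈ Set.uIcc (0:ℝ) t, |KK c u s| ≤ M * |s|^(n+1) / (n+1).factorial := by
  intro s hs
  have hsub : Set.uIcc (0:ℝ) s ⊆ Set.uIcc (0:ℝ) t := by
    apply Set.uIcc_subset_uIcc Set.left_mem_uIcc hs
  have hcont : Continuous fun x => Real.cos (c*(s-x)) * u x := by fun_prop
  have key : ∀ x ∈ Set.uIcc (0:ℝ) s, |Real.cos (c*(s-x)) * u x| ≤ M * |x|^n / n.factorial := by
    intro x hx
    calc |Real.cos (c*(s-x)) * u x| = |Real.cos (c*(s-x))| * |u x| := abs_mul _ _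
    _ ≤ 1 * |u x| := by
        apply mul_le_mul_of_nonneg_right (Real.abs_cos_le_one _) (abs_nonneg _)
    _ = |u x| := one_mul _
    _ ≤ M * |x|^n / n.factorial := hb x (hsub hx)
  rcases le_total 0 s with hs0 | hs0
  · have h1 : |KK c u s| ≤ ∫ x in (0:ℝ)..s, |Real.cos (c*(s-x)) * u x| := by
      simpa [KK] using intervalIntegral.abs_integral_le_integral_abs (f := fun x => Real.cos (c*(s-x)) * u x) hs0
    have h2 : (∫ x in (0:ℝ)..s, |Real.cos (c*(s-x)) * u x|)
        ≤ ∫ x in (0:ℝ)..s, M * x^n / n.factorial := by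
      apply intervalIntegral.integral_mono_on hs0
        ((hcont.abs).intervalIntegrable _ _) (Continuous.intervalIntegrable (by fun_prop) _ _)
      intro x hx
      have hx0 : 0 ≤ x := hx.1
      have := key x (by rw [Set.uIcc_of_le hs0]; exact hx)
      rwa [abs_of_nonneg hx0] at this
    have h3 : (∫ x in (0:ℝ)..s, M * x^n / n.factorial) = M * s^(n+1) / (n+1).factorial := by
      have hmm : ∀ x : ℝ, M * x^n / n.factorial = M / n.factorial * x^n := fun x => by ring
      simp_rw [hmm]
      rw [intervalIntegral.integral_const_mul, integral_pow, Nat.factorial_succ]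
      have h0 : (n.factorial:ℝ) ≠ 0 := Nat.cast_ne_zero.2 n.factorial_ne_zero
      have hq : (n:ℝ)+1 ≠ 0 := by positivity
      push_cast
      field_simp
      simp
    rw [abs_of_nonneg hs0]
    calc |KK c u s| ≤ _ := h1
    _ ≤ _ := h2
    _ = _ := h3
  · have h1 : |KK c u s| ≤ ∫ x in s..(0:ℝ), |Real.cos (c*(s-x)) * u x| := by
      rw [KK, intervalIntegral.integral_symm, abs_neg]
      simpa using intervalIntegral.abs_integral_le_integral_abs
        (f := fun x => Real.cos (c*(s-x)) * u x) hs0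
    have h2 : (∫ x in s..(0:ℝ), |Real.cos (c*(s-x)) * u x|)
        ≤ ∫ x in s..(0:ℝ), (fun y => M / n.factorial * y^n) (-x) := by
      apply intervalIntegral.integral_mono_on hs0
        ((hcont.abs).intervalIntegrable _ _) (Continuous.intervalIntegrable (by fun_prop) _ _)
      intro x hx
      have hx0 : x ≤ 0 := hx.2
      have := key x (by rw [Set.uIcc_of_ge hs0]; exact hx)
      rw [abs_of_nonpos hx0] at this
      calc |Real.cos (c*(s-x)) * u x| ≤ M * (-x)^n / n.factorial := this
      _ = M / n.factorial * (-x)^n := by ring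
    have h3 : (∫ x in s..(0:ℝ), (fun y => M / n.factorial * y^n) (-x))
        = M * (-s)^(n+1) / (n+1).factorial := by
      rw [intervalIntegral.integral_comp_neg (fun y => M / n.factorial * y^n)]
      rw [neg_zero, intervalIntegral.integral_const_mul, integral_pow, Nat.factorial_succ]
      have h0 : (n.factorial:ℝ) ≠ 0 := Nat.cast_ne_zero.2 n.factorial_ne_zero
      have hq : (n:ℝ)+1 ≠ 0 := by positivity
      push_cast
      field_simp
      simp
    rw [abs_of_nonpos hs0]
    calc |KK c u s| ≤ _ := h1
    _ ≤ _ := h2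
    _ = _ := h3

lemma H_zero (c t : ℝ) : H c 0 t = Real.cos (c * t) := by simp [H, iterInt]

lemma H_continuous (c : ℝ) (n : ℕ) : Continuous (H c n) := by
  induction n with
  | zero =>
    have : H c 0 = fun t => Real.cos (c*t) := funext fun t => H_zero c t
    rw [this]; fun_prop
  | succ n ih =>
    have : H c (n+1) = KK c (H c n) := funext fun t => H_succ c n t
    rw [this]; exact KK_continuous ih

lemma H_eq_Kn (c : ℝ) (n : ℕ) : H c n = Kn c n (fun s => Real.cos (c*s)) := by
  induction n with
  | zero => exact funext fun t => by simpa [Kn] using H_zero c t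
  | succ n ih =>
    funext t
    rw [show Kn c (n+1) (fun s => Real.cos (c*s)) = KK c (Kn c n (fun s => Real.cos (c*s))) from rfl,
      ← ih, H_succ]

lemma Kn_bound {c : ℝ} {u : ℝ → ℝ} (hu : Continuous u) {M t : ℝ}
    (hb : ∀ s ∈ Set.uIcc (0:ℝ) t, |u s| ≤ M) (n : ℕ) :
    ∀ s ∈ Set.uIcc (0:ℝ) t, |Kn c n u s| ≤ M * |s|^n / n.factorial := by
  induction n with
  | zero => intro s hs; simpa [Kn] using hb s hs
  | succ n ih => exact KK_bound (Kn_continuous hu n) ih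

lemma H_bound (c t : ℝ) (n : ℕ) : |H c n t| ≤ |t|^n / n.factorial := by
  have hb : ∀ s ∈ Set.uIcc (0:ℝ) t, |(fun s => Real.cos (c*s)) s| ≤ (1:ℝ) :=
    fun s _ => Real.abs_cos_le_one _
  have := Kn_bound (c := c) (by fun_prop) hb n t Set.right_mem_uIcc
  rw [← H_eq_Kn] at this
  simpa using this

lemma summable_H (c lam t : ℝ) : Summable (fun n => lam^n * H c n t) := by
  have hsum := Real.summable_pow_div_factorial (|lam| * |t|)
  apply Summable.of_norm_bounded hsum
  intro n
  rw [Real.norm_eq_abs, abs_mul, abs_pow, mul_pow]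
  calc |lam|^n * |H c n t| ≤ |lam|^n * (|t|^n / n.factorial) := by
        apply mul_le_mul_of_nonneg_left (H_bound c t n) (by positivity)
  _ = |lam|^n * |t|^n / n.factorial := by ring

lemma tsum_eq_of_volterra {c lam : ℝ} {G : ℝ → ℝ} (hG : Continuous G)
    (hVol : ∀ t, G t = Real.cos (c*t) + lam * KK c G t) (t : ℝ) :
    ∑' n : ℕ, lam^n * H c n t = G t := by
  -- the shifted recursion
  have Q : ∀ n : ℕ, ∀ x, Kn c n G x = H c n x + lam * Kn c (n+1) G x := by
    intro n
    induction n with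
    | zero => intro x; rw [show Kn c 0 G x = G x from rfl, hVol x, H_zero]; rfl
    | succ n ih =>
      intro x
      have hfun : Kn c n G = fun x => H c n x + lam * Kn c (n+1) G x := funext ih
      calc Kn c (n+1) G x = KK c (Kn c n G) x := rfl
      _ = KK c (fun x => H c n x + lam * Kn c (n+1) G x) x := by rw [← hfun]
      _ = KK c (H c n) x + lam * KK c (Kn c (n+1) G) x :=
          KK_add (H_continuous c n) (Kn_continuous hG (n+1)) lam x
      _ = H c (n+1) x + lam * Kn c (n+2) G x := by rw [← H_succ]; rfl
  have P : ∀ N : ℕ, G t = (∑ n ∈ Finset.range N, lam^n * H c n t) + lam^N * Kn c N G t := by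
    intro N
    induction N with
    | zero => simp [Kn]
    | succ N ih =>
      rw [ih, Q N t, Finset.sum_range_succ]
      ring
  -- bound
  obtain ⟨M, hM⟩ : ∃ M, ∀ x ∈ Set.uIcc (0:ℝ) t, |G x| ≤ M := by
    obtain ⟨M, hM⟩ := (isCompact_uIcc (a := (0:ℝ)) (b := t)).exists_bound_of_continuousOn
      hG.continuousOn
    exact ⟨M, fun x hx => hM x hx⟩
  have hKn := fun n => Kn_bound (c := c) hG hM n t Set.right_mem_uIcc
  have htend : Filter.Tendsto (fun N : ℕ => lam^N * Kn c N G t) Filter.atTop (nhds 0) := by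
    have h2 : Filter.Tendsto (fun N : ℕ => M * ((|lam| * |t|)^N / N.factorial))
        Filter.atTop (nhds 0) := by
      simpa using (FloorSemiring.tendsto_pow_div_factorial_atTop (|lam| * |t|)).const_mul M
    refine squeeze_zero_norm (fun n => ?_) h2
    rw [Real.norm_eq_abs, abs_mul, abs_pow]
    calc |lam|^n * |Kn c n G t| ≤ |lam|^n * (M * |t|^n / n.factorial) := by
          apply mul_le_mul_of_nonneg_left (hKn n) (by positivity)
    _ = M * ((|lam| * |t|)^n / n.factorial) := by rw [mul_pow]; ring
  have hps : Filter.Tendsto (fun N : ℕ => ∑ n ∈ Finset.range N, lam^n * H c n t)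
      Filter.atTop (nhds (G t)) := by
    have : (fun N : ℕ => ∑ n ∈ Finset.range N, lam^n * H c n t)
        = fun N => G t - lam^N * Kn c N G t := funext fun N => by rw [P N]; ring
    rw [this]
    simpa using (tendsto_const_nhds (x := G t)).sub htend
  exact tendsto_nhds_unique ((summable_H c lam t).hasSum.tendsto_sum_nat) hps

section master
variable {lam c : ℝ} {φ ψ : ℝ → ℝ}

lemma G_volterra (hc : c ≠ 0)
    (hφ : ∀ t, HasDerivAt φ ((lam^2 - 4*c^2)/2 * ψ t) t)
    (hψ : ∀ t, HasDerivAt ψ (φ t / 2) t)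
    (hφ0 : φ 0 = 1) (hψ0 : ψ 0 = 0) (t : ℝ) :
    Real.exp (lam*t/2) * (φ t + lam * ψ t)
      = Real.cos (c*t) + lam * KK c (fun x => Real.exp (lam*x/2) * (φ x + lam * ψ x)) t := by
  set G : ℝ → ℝ := fun x => Real.exp (lam*x/2) * (φ x + lam * ψ x) with hGdef
  set Gd : ℝ → ℝ := fun x => Real.exp (lam*x/2) * (lam * φ x + (lam^2 - 2*c^2) * ψ x) with hGd
  have hexp : ∀ x : ℝ, HasDerivAt (fun y => Real.exp (lam*y/2)) (lam/2 * Real.exp (lam*x/2)) x := by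
    intro x
    have h1 : HasDerivAt (fun y : ℝ => lam*y/2) (lam/2) x := by
      simpa using ((hasDerivAt_id x).const_mul lam).div_const 2
    simpa [mul_comm, Function.comp_def] using (Real.hasDerivAt_exp (lam*x/2)).comp x h1
  have hG : ∀ x, HasDerivAt G (Gd x) x := by
    intro x
    have h := (hexp x).fun_mul (((hφ x).fun_add ((hψ x).const_mul lam)))
    convert! h using 1
    ring
  have hGderiv : ∀ x, HasDerivAt Gd
      (Real.exp (lam*x/2) * ((lam^2 - c^2) * φ x + (lam^3 - 3*lam*c^2) * ψ x)) x := by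
    intro x
    have h := (hexp x).fun_mul (((hφ x).const_mul lam).fun_add ((hψ x).const_mul (lam^2 - 2*c^2)))
    convert! h using 1
    ring
  have hGcont : Continuous G := by
    have : Differentiable ℝ G := fun x => (hG x).differentiableAt
    exact this.continuous
  have hcu : Continuous fun s => Real.cos (c*s) * G s := by fun_prop
  have hsu : Continuous fun s => Real.sin (c*s) * G s := by fun_prop
  set A : ℝ → ℝ := fun x => ∫ s in (0:ℝ)..x, Real.cos (c*s) * G s with hAdef
  set B : ℝ → ℝ := fun x => ∫ s in (0:ℝ)..x, Real.sin (c*s) * G s with hBdef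
  have hA : ∀ x, HasDerivAt A (Real.cos (c*x) * G x) x := fun x => primitive_hasDerivAt hcu x
  have hB : ∀ x, HasDerivAt B (Real.sin (c*x) * G x) x := fun x => primitive_hasDerivAt hsu x
  have hcos : ∀ x : ℝ, HasDerivAt (fun y => Real.cos (c*y)) (-c * Real.sin (c*x)) x := by
    intro x
    simpa [mul_comm, Function.comp_def] using (Real.hasDerivAt_cos (c*x)).comp x ((hasDerivAt_id x).const_mul c)
  have hsin : ∀ x : ℝ, HasDerivAt (fun y => Real.sin (c*y)) (c * Real.cos (c*x)) x := by
    intro x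
    simpa [mul_comm, Function.comp_def] using (Real.hasDerivAt_sin (c*x)).comp x ((hasDerivAt_id x).const_mul c)
  set D : ℝ → ℝ := fun x => lam * (Real.cos (c*x) * A x + Real.sin (c*x) * B x)
      + Real.cos (c*x) - G x with hDdef
  set Dd : ℝ → ℝ := fun x => lam * (-c * Real.sin (c*x) * A x + c * Real.cos (c*x) * B x + G x)
      - c * Real.sin (c*x) - Gd x with hDddef
  have pyth : ∀ x : ℝ, Real.cos (c*x) * Real.cos (c*x) + Real.sin (c*x) * Real.sin (c*x) = 1 := by
    intro x; rw [← Real.cos_sub]; simp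
  have hD : ∀ x, HasDerivAt D (Dd x) x := by
    intro x
    have h := (((((hcos x).fun_mul (hA x)).fun_add ((hsin x).fun_mul (hB x))).const_mul lam).fun_add
      (hcos x)).fun_sub (hG x)
    convert! h using 1
    have hp := pyth x
    simp only [hDddef]
    linear_combination (-(lam * G x)) * hp
  have hDd : ∀ x, HasDerivAt Dd (-c^2 * D x) x := by
    intro x
    have h := (((((((hsin x).fun_mul (hA x)).const_mul (-c)).fun_add
      (((hcos x).fun_mul (hB x)).const_mul c)).fun_add (hG x)).const_mul lam).fun_sub
      ((hsin x).const_mul c)).fun_sub (hGderiv x)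
    have hfeq : (fun x : ℝ => lam * (-c * (Real.sin (c*x) * A x) + c * (Real.cos (c*x) * B x)
        + G x) - c * Real.sin (c*x) - Gd x) = Dd := by
      funext y; simp only [hDddef]; ring
    rw [hfeq] at h
    convert! h using 1
    simp only [hDdef, hGd, hGdef]
    ring
  -- energy argument
  set En : ℝ → ℝ := fun x => Dd x^2 + c^2 * D x^2 with hEndef
  have hEn : ∀ x, HasDerivAt En 0 x := by
    intro x
    have h := (((hDd x).fun_pow 2).fun_add (((hD x).fun_pow 2).const_mul (c^2)))
    convert! h using 1
    ring
  have hEnconst : ∀ x, En x = En 0 :=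
    fun x => is_const_of_deriv_eq_zero (fun y => (hEn y).differentiableAt)
      (fun y => (hEn y).deriv) x 0
  have hA0 : A 0 = 0 := intervalIntegral.integral_same
  have hB0 : B 0 = 0 := intervalIntegral.integral_same
  have hG0 : G 0 = 1 := by simp [hGdef, hφ0, hψ0]
  have hGd0 : Gd 0 = lam := by simp [hGd, hφ0, hψ0]
  have hEn0 : En 0 = 0 := by
    simp [hEndef, hDddef, hDdef, hA0, hB0, hG0, hGd0]
  have hDzero : D t = 0 := by
    have h1 := hEnconst t
    rw [hEn0] at h1
    have h2 : Dd t^2 + c^2 * D t^2 = 0 := h1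
    have hc2 : 0 < c^2 := by positivity
    have hD2 : D t ^ 2 = 0 := by nlinarith [sq_nonneg (Dd t), sq_nonneg (D t)]
    exact pow_eq_zero_iff two_ne_zero |>.mp hD2
  have hKKG : KK c G t = Real.cos (c*t) * A t + Real.sin (c*t) * B t := KK_eq hGcont t
  have : lam * (Real.cos (c*t) * A t + Real.sin (c*t) * B t) + Real.cos (c*t) - G t = 0 := hDzero
  rw [show Real.exp (lam*t/2) * (φ t + lam * ψ t) = G t from rfl, hKKG]
  linarith [this]
end master

lemma main_master (lam c : ℝ) (hc : c ≠ 0) (φ ψ : ℝ → ℝ)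
    (hφ : ∀ t, HasDerivAt φ ((lam^2 - 4*c^2)/2 * ψ t) t)
    (hψ : ∀ t, HasDerivAt ψ (φ t / 2) t) (hφ0 : φ 0 = 1) (hψ0 : ψ 0 = 0)
    (E : ℝ → ℝ) (hE : ∀ t, E t = Real.exp (-lam * t) * ∑' n : ℕ, lam ^ n * H c n t) :
    (∀ t, E t = Real.exp (-(lam * t) / 2) * (φ t + lam * ψ t))
    ∧ (∀ t, deriv (deriv E) t = -lam * deriv E t - c^2 * E t)
    ∧ E 0 = 1 ∧ deriv E 0 = 0 := by
  have hφd : Differentiable ℝ φ := fun x => (hφ x).differentiableAt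
  have hψd : Differentiable ℝ ψ := fun x => (hψ x).differentiableAt
  have hφc : Continuous φ := hφd.continuous
  have hψc : Continuous ψ := hψd.continuous
  have hGcont : Continuous (fun x => Real.exp (lam*x/2) * (φ x + lam * ψ x)) := by fun_prop
  have htsum : ∀ t, (∑' n : ℕ, lam^n * H c n t) = Real.exp (lam*t/2) * (φ t + lam * ψ t) :=
    fun t => tsum_eq_of_volterra hGcont (fun s => G_volterra hc hφ hψ hφ0 hψ0 s) t
  have hEform : ∀ t, E t = Real.exp (-(lam * t) / 2) * (φ t + lam * ψ t) := by
    intro t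
    rw [hE t, htsum t, ← mul_assoc, ← Real.exp_add]
    congr 2
    ring
  set Ed : ℝ → ℝ := fun x => -2*c^2 * Real.exp (-(lam*x)/2) * ψ x with hEddef
  have hexp' : ∀ x : ℝ, HasDerivAt (fun y => Real.exp (-(lam*y)/2))
      (-(lam/2) * Real.exp (-(lam*x)/2)) x := by
    intro x
    have h1 : HasDerivAt (fun y : ℝ => -(lam*y)/2) (-(lam/2)) x := by
      have h0 := (((hasDerivAt_id x).const_mul lam).fun_neg).div_const 2
      convert! h0 using 1
      ring
    simpa [mul_comm, Function.comp_def] using (Real.hasDerivAt_exp (-(lam*x)/2)).comp x h1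
  have hE' : ∀ x, HasDerivAt E (Ed x) x := by
    intro x
    have h := (hexp' x).fun_mul ((hφ x).fun_add ((hψ x).const_mul lam))
    have hfeq : (fun y => Real.exp (-(lam*y)/2) * (φ y + lam * ψ y)) = E := by
      funext y; rw [hEform y]
    rw [hfeq] at h
    convert! h using 1
    simp only [hEddef]
    ring
  have hEd' : ∀ x, HasDerivAt Ed (-lam * Ed x - c^2 * E x) x := by
    intro x
    have h := ((hexp' x).fun_mul (hψ x)).const_mul (-2*c^2)
    have hfeq : (fun y => -2*c^2 * (Real.exp (-(lam*y)/2) * ψ y)) = Ed := by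
      funext y; simp only [hEddef]; ring
    rw [hfeq] at h
    convert! h using 1
    rw [hEform x]
    simp only [hEddef]
    have harg : -(lam * x) / 2 = -(lam*x)/2 := by ring
    rw [harg]
    ring
  have hderivE : deriv E = Ed := funext fun x => (hE' x).deriv
  refine ⟨hEform, ?_, ?_, ?_⟩
  · intro t
    rw [hderivE]
    exact (hEd' t).deriv
  · rw [hEform 0]; simp [hφ0, hψ0]
  · rw [hderivE]; simp only [hEddef]; rw [hψ0]; ring

/-- the mean value `E(t) = e^{-λt} ∑ λⁿ H_n(t)` of `cos d(P₀P_t)`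
for the motion on the sphere satisfies `E'' = -λE' - c²E`, `E(0)=1`, `E'(0)=0`,
and hence has the explicit three-regime form. -/
theorem spherical_mean_ode_and_solution (lam c : ℝ) (hlam : 0 < lam) (hc : 0 < c)
    (E : ℝ → ℝ) (hE : ∀ t, E t = Real.exp (-lam * t) * ∑' n : ℕ, lam ^ n * H c n t) :
    (∀ t, 0 < t → deriv (deriv E) t = -lam * deriv E t - c^2 * E t)
    ∧ E 0 = 1 ∧ deriv E 0 = 0
    ∧ (0 < 2 * c → 2 * c < lam → ∀ t, 0 ≤ t → E t
        = Real.exp (-(lam * t) / 2) *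
            (Real.cosh (t / 2 * Real.sqrt (lam^2 - 4*c^2))
              + lam / Real.sqrt (lam^2 - 4*c^2) * Real.sinh (t / 2 * Real.sqrt (lam^2 - 4*c^2))))
    ∧ (lam = 2 * c → ∀ t, 0 ≤ t → E t
        = Real.exp (-(lam * t) / 2) * (1 + lam * t / 2))
    ∧ (lam < 2 * c → ∀ t, 0 ≤ t → E t
        = Real.exp (-(lam * t) / 2) *
            (Real.cos (t / 2 * Real.sqrt (4*c^2 - lam^2))
              + lam / Real.sqrt (4*c^2 - lam^2) * Real.sin (t / 2 * Real.sqrt (4*c^2 - lam^2)))) := by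
  have hcne : c ≠ 0 := ne_of_gt hc
  rcases lt_trichotomy lam (2*c) with hlt | heq | hgt
  · -- oscillatory regime : lam < 2c
    set μ := Real.sqrt (4*c^2 - lam^2) with hμdef
    have hpos : (0:ℝ) < 4*c^2 - lam^2 := by nlinarith
    have hμ2 : μ^2 = 4*c^2 - lam^2 := Real.sq_sqrt hpos.le
    have hμpos : 0 < μ := Real.sqrt_pos.mpr hpos
    have hμne : μ ≠ 0 := ne_of_gt hμpos
    set φ : ℝ → ℝ := fun t => Real.cos (t/2*μ) with hφdef
    set ψ : ℝ → ℝ := fun t => μ⁻¹ * Real.sin (t/2*μ) with hψdef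
    have hin : ∀ t : ℝ, HasDerivAt (fun y : ℝ => y/2*μ) (1/2*μ) t := by
      intro t
      simpa using ((hasDerivAt_id t).div_const 2).mul_const μ
    have hφ : ∀ t, HasDerivAt φ ((lam^2 - 4*c^2)/2 * ψ t) t := by
      intro t
      have h := (Real.hasDerivAt_cos (t/2*μ)).comp t (hin t)
      convert! h using 1
      simp only [hψdef]
      rw [show lam^2 - 4*c^2 = -μ^2 from by rw [hμ2]; ring]
      field_simp
    have hψ : ∀ t, HasDerivAt ψ (φ t / 2) t := by
      intro t
      have h := ((Real.hasDerivAt_sin (t/2*μ)).comp t (hin t)).const_mul μ⁻¹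
      convert! h using 1
      simp only [hφdef]
      field_simp
    have hφ0 : φ 0 = 1 := by simp [hφdef]
    have hψ0 : ψ 0 = 0 := by simp [hψdef]
    obtain ⟨hform, hode, hE0, hE'0⟩ := main_master lam c hcne φ ψ hφ hψ hφ0 hψ0 E hE
    refine ⟨fun t _ => hode t, hE0, hE'0, ?_, ?_, ?_⟩
    · intro _ h2; linarith
    · intro h2; linarith
    · intro _ t _
      rw [hform t]
      simp only [hφdef, hψdef]
      ring
  · -- critical regime : lam = 2c
    set φ : ℝ → ℝ := fun _ => (1:ℝ) with hφdef
    set ψ : ℝ → ℝ := fun t => t/2 with hψdef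
    have hφ : ∀ t, HasDerivAt φ ((lam^2 - 4*c^2)/2 * ψ t) t := by
      intro t
      have h := hasDerivAt_const t (1:ℝ)
      convert! h using 1
      rw [heq]; ring
    have hψ : ∀ t, HasDerivAt ψ (φ t / 2) t := by
      intro t
      have h := (hasDerivAt_id t).div_const 2
      have : φ t / 2 = 1/2 := by norm_num [hφdef]
      rw [this]
      exact h
    obtain ⟨hform, hode, hE0, hE'0⟩ := main_master lam c hcne φ ψ hφ hψ rfl (by norm_num) E hE
    refine ⟨fun t _ => hode t, hE0, hE'0, ?_, ?_, ?_⟩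
    · intro _ h2; linarith
    · intro _ t _
      rw [hform t]
      ring
    · intro h2; linarith
  · -- hyperbolic regime : 2c < lam
    set ω := Real.sqrt (lam^2 - 4*c^2) with hωdef
    have hpos : (0:ℝ) < lam^2 - 4*c^2 := by nlinarith
    have hω2 : ω^2 = lam^2 - 4*c^2 := Real.sq_sqrt hpos.le
    have hωpos : 0 < ω := Real.sqrt_pos.mpr hpos
    have hωne : ω ≠ 0 := ne_of_gt hωpos
    set φ : ℝ → ℝ := fun t => Real.cosh (t/2*ω) with hφdef
    set ψ : ℝ → ℝ := fun t => ω⁻¹ * Real.sinh (t/2*ω) with hψdef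
    have hin : ∀ t : ℝ, HasDerivAt (fun y : ℝ => y/2*ω) (1/2*ω) t := by
      intro t
      simpa using ((hasDerivAt_id t).div_const 2).mul_const ω
    have hφ : ∀ t, HasDerivAt φ ((lam^2 - 4*c^2)/2 * ψ t) t := by
      intro t
      have h := (Real.hasDerivAt_cosh (t/2*ω)).comp t (hin t)
      convert! h using 1
      simp only [hψdef]
      rw [← hω2]
      field_simp
    have hψ : ∀ t, HasDerivAt ψ (φ t / 2) t := by
      intro t
      have h := ((Real.hasDerivAt_sinh (t/2*ω)).comp t (hin t)).const_mul ω⁻¹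
      convert! h using 1
      simp only [hφdef]
      field_simp
    have hφ0 : φ 0 = 1 := by simp [hφdef]
    have hψ0 : ψ 0 = 0 := by simp [hψdef]
    obtain ⟨hform, hode, hE0, hE'0⟩ := main_master lam c hcne φ ψ hφ hψ hφ0 hψ0 E hE
    refine ⟨fun t _ => hode t, hE0, hE'0, ?_, ?_, ?_⟩
    · intro _ _ t _
      rw [hform t]
      simp only [hφdef, hψdef]
      ring
    · intro h2; linarith
    · intro h2; linarith
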